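/- The irreflexivity rule ir does not occur in any G3GL proof whose end sequent is a tree sequent: if R, Γ ⊢ Δ is a tree sequent, then no sequent occurring in a G3GL proof of it contains a relational atom of the form xRx, and more generally no sequent in the proof contains a directed cycle of relational atoms. -/

import Mathlib

/-- Modal formulas built from propositional atoms with ¬, ∨, □. -/
inductive Fml : Type
  | atom : ℕ → Fml
  | neg : Fml → Fml
  | or : Fml → Fml → Fml
  | box : Fml → Fml
  deriving DecidableEq

/-- Implication φ → ψ abbreviates ¬φ ∨ ψ. -/
def Fml.imp (φ ψ : Fml) : Fml := .or (.neg φ) ψ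

/-- Conjunction φ ∧ ψ abbreviates ¬(¬φ ∨ ¬ψ). -/
def Fml.and (φ ψ : Fml) : Fml := .neg (.or (.neg φ) (.neg ψ))

/-- A label y is fresh for the data R, Γ, Δ. -/
def FreshFor (y : ℕ) (R : Set (ℕ × ℕ)) (Γ Δ : Multiset (ℕ × Fml)) : Prop :=
  (∀ a b, (a, b) ∈ R → y ≠ a ∧ y ≠ b) ∧ (∀ ψ, (y, ψ) ∉ Γ) ∧ (∀ ψ, (y, ψ) ∉ Δ)

/-- Edge relation of a set of relational atoms. -/
def Edge (R : Set (ℕ × ℕ)) (a b : ℕ) : Prop := (a, b) ∈ R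

/-- Labels occurring in a set of relational atoms. -/
def nodes (R : Set (ℕ × ℕ)) : Set ℕ := {x | ∃ y, (x, y) ∈ R ∨ (y, x) ∈ R}

/-- The relational atoms R form a (rooted) tree. -/
def IsTree (R : Set (ℕ × ℕ)) : Prop :=
  ∃ r ∈ nodes R,
    (∀ x ∈ nodes R, Relation.ReflTransGen (Edge R) r x) ∧
    (∀ x, ¬ Relation.TransGen (Edge R) x x) ∧
    (∀ x y y', Edge R y x → Edge R y' x → y = y') ∧
    (∀ y, ¬ Edge R y r)

/-- `TreeSeq R Γ Δ` : the labeled sequent R, Γ ⊢ Δ is a tree sequent. -/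
def TreeSeq (R : Set (ℕ × ℕ)) (Γ Δ : Multiset (ℕ × Fml)) : Prop :=
  (R = ∅ → ∃ x, ∀ p ∈ Γ + Δ, Prod.fst p = x) ∧
  (R ≠ ∅ → IsTree R ∧ ∀ p ∈ Γ + Δ, Prod.fst p ∈ nodes R)

/-- `r` is the root of the tree sequent R, Γ ⊢ Δ. -/
def IsRootOf (R : Set (ℕ × ℕ)) (Γ Δ : Multiset (ℕ × Fml)) (r : ℕ) : Prop :=
  (R = ∅ ∧ ∀ p ∈ Γ + Δ, Prod.fst p = r) ∨
  (r ∈ nodes R ∧ ∀ x ∈ nodes R, Relation.ReflTransGen (Edge R) r x)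

/-- x is a leaf of the tree of relational atoms R. -/
def Leaf (R : Set (ℕ × ℕ)) (x : ℕ) : Prop := ∀ y, (x, y) ∉ R

/-- x is a pre-leaf: all of its children are leaves. -/
def PreLeaf (R : Set (ℕ × ℕ)) (x : ℕ) : Prop := ∀ y, (x, y) ∈ R → Leaf R y

/-- Proof trees of the labeled sequent calculus G3GL: `G3D R Γ Δ` is the type
of G3GL proofs of the labeled sequent R, Γ ⊢ Δ. -/
inductive G3D : Set (ℕ × ℕ) → Multiset (ℕ × Fml) → Multiset (ℕ × Fml) → Type
  | id1 (R : Set (ℕ × ℕ)) (Γ Δ : Multiset (ℕ × Fml)) (x p : ℕ) :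
      G3D R ((x, Fml.atom p) ::ₘ Γ) ((x, Fml.atom p) ::ₘ Δ)
  | id2 (R : Set (ℕ × ℕ)) (Γ Δ : Multiset (ℕ × Fml)) (x : ℕ) (φ : Fml) :
      G3D R ((x, Fml.box φ) ::ₘ Γ) ((x, Fml.box φ) ::ₘ Δ)
  | ir (R : Set (ℕ × ℕ)) (Γ Δ : Multiset (ℕ × Fml)) (x : ℕ) (h : (x, x) ∈ R) :
      G3D R Γ Δ
  | tr (R : Set (ℕ × ℕ)) (Γ Δ : Multiset (ℕ × Fml)) (x y z : ℕ)
      (hxy : (x, y) ∈ R) (hyz : (y, z) ∈ R) :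
      G3D (insert (x, z) R) Γ Δ → G3D R Γ Δ
  | negL (R : Set (ℕ × ℕ)) (Γ Δ : Multiset (ℕ × Fml)) (x : ℕ) (φ : Fml) :
      G3D R Γ ((x, φ) ::ₘ Δ) → G3D R ((x, Fml.neg φ) ::ₘ Γ) Δ
  | negR (R : Set (ℕ × ℕ)) (Γ Δ : Multiset (ℕ × Fml)) (x : ℕ) (φ : Fml) :
      G3D R ((x, φ) ::ₘ Γ) Δ → G3D R Γ ((x, Fml.neg φ) ::ₘ Δ)
  | orL (R : Set (ℕ × ℕ)) (Γ Δ : Multiset (ℕ × Fml)) (x : ℕ) (φ ψ : Fml) :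
      G3D R ((x, φ) ::ₘ Γ) Δ → G3D R ((x, ψ) ::ₘ Γ) Δ →
      G3D R ((x, Fml.or φ ψ) ::ₘ Γ) Δ
  | orR (R : Set (ℕ × ℕ)) (Γ Δ : Multiset (ℕ × Fml)) (x : ℕ) (φ ψ : Fml) :
      G3D R Γ ((x, φ) ::ₘ (x, ψ) ::ₘ Δ) → G3D R Γ ((x, Fml.or φ ψ) ::ₘ Δ)
  | boxL (R : Set (ℕ × ℕ)) (Γ Δ : Multiset (ℕ × Fml)) (x y : ℕ) (φ : Fml)
      (h : (x, y) ∈ R) :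
      G3D R ((x, Fml.box φ) ::ₘ (y, φ) ::ₘ Γ) Δ → G3D R ((x, Fml.box φ) ::ₘ Γ) Δ
  | boxR (R : Set (ℕ × ℕ)) (Γ Δ : Multiset (ℕ × Fml)) (x y : ℕ) (φ : Fml)
      (hxy : y ≠ x) (hfresh : FreshFor y R Γ ((x, Fml.box φ) ::ₘ Δ)) :
      G3D (insert (x, y) R) ((y, Fml.box φ) ::ₘ Γ) ((y, φ) ::ₘ Δ) →
      G3D R Γ ((x, Fml.box φ) ::ₘ Δ)

/-- The rule ir does not occur anywhere in the proof tree. -/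
def IrFree : ∀ {R : Set (ℕ × ℕ)} {Γ Δ : Multiset (ℕ × Fml)}, G3D R Γ Δ → Prop
  | _, _, _, .id1 _ _ _ _ _ => True
  | _, _, _, .id2 _ _ _ _ _ => True
  | _, _, _, .ir _ _ _ _ _ => False
  | _, _, _, .tr _ _ _ _ _ _ _ _ d => IrFree d
  | _, _, _, .negL _ _ _ _ _ d => IrFree d
  | _, _, _, .negR _ _ _ _ _ d => IrFree d
  | _, _, _, .orL _ _ _ _ _ _ d e => IrFree d ∧ IrFree e
  | _, _, _, .orR _ _ _ _ _ _ d => IrFree d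
  | _, _, _, .boxL _ _ _ _ _ _ _ d => IrFree d
  | _, _, _, .boxR _ _ _ _ _ _ _ _ d => IrFree d

/-- `AllRel P d` : the property P holds of the set of relational atoms of
every sequent occurring in the proof tree d. -/
def AllRel (P : Set (ℕ × ℕ) → Prop) :
    ∀ {R : Set (ℕ × ℕ)} {Γ Δ : Multiset (ℕ × Fml)}, G3D R Γ Δ → Prop
  | R, _, _, .id1 _ _ _ _ _ => P R
  | R, _, _, .id2 _ _ _ _ _ => P R
  | R, _, _, .ir _ _ _ _ _ => P R
  | R, _, _, .tr _ _ _ _ _ _ _ _ d => P R ∧ AllRel P d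
  | R, _, _, .negL _ _ _ _ _ d => P R ∧ AllRel P d
  | R, _, _, .negR _ _ _ _ _ d => P R ∧ AllRel P d
  | R, _, _, .orL _ _ _ _ _ _ d e => P R ∧ AllRel P d ∧ AllRel P e
  | R, _, _, .orR _ _ _ _ _ _ d => P R ∧ AllRel P d
  | R, _, _, .boxL _ _ _ _ _ _ _ d => P R ∧ AllRel P d
  | R, _, _, .boxR _ _ _ _ _ _ _ _ d => P R ∧ AllRel P d

def Acyc (R : Set (ℕ × ℕ)) : Prop :=
  ∀ x, ¬ Relation.TransGen (fun a b => (a, b) ∈ R) x x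

lemma acyc_insert_trans {R : Set (ℕ × ℕ)} {x y z : ℕ}
    (hxy : (x, y) ∈ R) (hyz : (y, z) ∈ R) (h : Acyc R) :
    Acyc (insert (x, z) R) := by
  intro u hu
  have sub : ∀ a b : ℕ, (a, b) ∈ insert (x, z) R →
      Relation.TransGen (fun a b => (a, b) ∈ R) a b := by
    intro a b hab
    rcases Set.mem_insert_iff.1 hab with hab | hab
    · obtain ⟨rfl, rfl⟩ := Prod.mk.injEq .. ▸ hab
      exact Relation.TransGen.tail (Relation.TransGen.single hxy) hyz
    · exact Relation.TransGen.single hab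
  have := Relation.TransGen.mono sub u u hu
  rw [Relation.transGen_idem] at this
  exact h u this

lemma no_path_of_no_out {S : ℕ → ℕ → Prop} {y : ℕ}
    (h : ∀ c, ¬ S y c) : ∀ v, ¬ Relation.TransGen S y v := by
  intro v hv
  induction hv with
  | single hs => exact h _ hs
  | tail _ _ ih => exact ih

lemma acyc_insert_fresh {R : Set (ℕ × ℕ)} {x y : ℕ} (hyx : y ≠ x)
    (hf : ∀ a b : ℕ, (a, b) ∈ R → y ≠ a ∧ y ≠ b) (h : Acyc R) :
    Acyc (insert (x, y) R) := by
  have noS : ∀ c : ℕ, (y, c) ∉ insert (x, y) R := by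
    intro c hc
    rcases Set.mem_insert_iff.1 hc with hc | hc
    · exact hyx (congrArg Prod.fst hc)
    · exact (hf _ _ hc).1 rfl
  have aux : ∀ u v, Relation.TransGen (fun a b => (a, b) ∈ insert (x, y) R) u v →
      v ≠ y → Relation.TransGen (fun a b => (a, b) ∈ R) u v := by
    intro u v huv
    induction huv with
    | single hs =>
      intro hvy
      rcases Set.mem_insert_iff.1 hs with hs | hs
      · exact absurd (congrArg Prod.snd hs) hvy
      · exact Relation.TransGen.single hs
    | @tail b c hub hbc ih =>
      intro hcy
      rcases Set.mem_insert_iff.1 hbc with hbc | hbc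
      · exact absurd (congrArg Prod.snd hbc) hcy
      · have hbny : b ≠ y := fun hb => (hf _ _ (hb ▸ hbc)).1 rfl
        exact Relation.TransGen.tail (ih hbny) hbc
  intro u hu
  by_cases huy : u = y
  · subst huy
    exact no_path_of_no_out noS _ hu
  · exact h u (aux _ _ hu huy)

lemma g3d_irfree_allrel {R : Set (ℕ × ℕ)} {Γ Δ : Multiset (ℕ × Fml)}
    (d : G3D R Γ Δ) (h : Acyc R) :
    IrFree d ∧
    AllRel (fun R' => (∀ x, (x, x) ∉ R') ∧
      ∀ x, ¬ Relation.TransGen (fun a b => (a, b) ∈ R') x x) d := by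
  induction d with
  | id1 R Γ Δ x p =>
    exact ⟨trivial, fun x hx => h x (Relation.TransGen.single hx), h⟩
  | id2 R Γ Δ x φ =>
    exact ⟨trivial, fun x hx => h x (Relation.TransGen.single hx), h⟩
  | ir R Γ Δ x hx =>
    exact absurd (Relation.TransGen.single hx) (h x)
  | tr R Γ Δ x y z hxy hyz d ih =>
    have h' := acyc_insert_trans hxy hyz h
    exact ⟨(ih h').1, ⟨fun x hx => h x (Relation.TransGen.single hx), h⟩, (ih h').2⟩
  | negL R Γ Δ x φ d ih =>
    exact ⟨(ih h).1, ⟨fun x hx => h x (Relation.TransGen.single hx), h⟩, (ih h).2⟩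
  | negR R Γ Δ x φ d ih =>
    exact ⟨(ih h).1, ⟨fun x hx => h x (Relation.TransGen.single hx), h⟩, (ih h).2⟩
  | orL R Γ Δ x φ ψ d e ihd ihe =>
    exact ⟨⟨(ihd h).1, (ihe h).1⟩,
      ⟨fun x hx => h x (Relation.TransGen.single hx), h⟩, (ihd h).2, (ihe h).2⟩
  | orR R Γ Δ x φ ψ d ih =>
    exact ⟨(ih h).1, ⟨fun x hx => h x (Relation.TransGen.single hx), h⟩, (ih h).2⟩
  | boxL R Γ Δ x y φ hR d ih =>
    exact ⟨(ih h).1, ⟨fun x hx => h x (Relation.TransGen.single hx), h⟩, (ih h).2⟩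
  | boxR R Γ Δ x y φ hyx hfresh d ih =>
    have h' := acyc_insert_fresh hyx hfresh.1 h
    exact ⟨(ih h').1, ⟨fun x hx => h x (Relation.TransGen.single hx), h⟩, (ih h').2⟩

/-- In any G3GL proof of a tree sequent, the rule ir does not occur; moreover
no sequent occurring in the proof contains a relational atom xRx, and more
generally no sequent in the proof contains a directed cycle of relational
atoms. -/
theorem g3gl_tree_sequent_proofs_ir_free_and_acyclic
    (R : Set (ℕ × ℕ)) (Γ Δ : Multiset (ℕ × Fml)) (hT : TreeSeq R Γ Δ)
    (d : G3D R Γ Δ) :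
    IrFree d ∧
    AllRel (fun R' => (∀ x, (x, x) ∉ R') ∧
      ∀ x, ¬ Relation.TransGen (fun a b => (a, b) ∈ R') x x) d := by
  apply g3d_irfree_allrel
  by_cases hR : R = ∅
  · subst hR
    intro x hx
    cases hx with
    | single hs => exact hs
    | tail _ hs => exact hs
  · exact (hT.2 hR).1.choose_spec.2.2.1
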